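/- arXiv:2008.11966 — 2 statements merged into one kernel-verified Lean document; each statement's English description precedes it below -/
import Mathlib

section
/- Let K ⊆ ℝ^d be a compact set with |K| > 0 and let {B_j}_{j≥0} be a hierarchical partition of K. Then the system X({B_j}_{j≥0}) = {φ_0} ∪ ∪_{j≥0} ∪_{B∈B_j} Ψ_{j,B} is a tight frame (with frame constant 1) for L²(K): for every f ∈ L²(K), ‖f‖² = |⟨f, φ_0⟩|² + Σ_{j≥0} Σ_{B∈B_j} Σ_{1≤ℓ_1<ℓ_2≤c_B} |⟨f, ψ_{j,B}^{(ℓ_1,ℓ_2)}⟩|². -/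
open MeasureTheory Filter

/-- A hierarchical partition of a set `K`: a sequence of finite collections of measurable
subsets of `K`, starting from `{K}`, each covering `K`, consisting of sets of positive
measure with pairwise null intersections, where every set of level `j` is the (enumerated)
union of its `c_B ≥ 1` children at level `j+1`, and with diameters tending to `0`. -/
structure HierarchicalPartition (X : Type*) [MeasureSpace X] [PseudoEMetricSpace X]
    (K : Set X) where
  part : ℕ → Finset (Set X)
  root : part 0 = {K}
  cover : ∀ j : ℕ, ⋃ B ∈ part j, B = K
  measurableSet : ∀ j : ℕ, ∀ B ∈ part j, MeasurableSet B
  pos : ∀ j : ℕ, ∀ B ∈ part j, 0 < volume B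
  null_inter : ∀ j : ℕ, ∀ B ∈ part j, ∀ B' ∈ part j, B ≠ B' → volume (B ∩ B') = 0
  numChild : ℕ → Set X → ℕ
  child : ℕ → Set X → ℕ → Set X
  one_le_numChild : ∀ j : ℕ, ∀ B ∈ part j, 1 ≤ numChild j B
  child_mem : ∀ j : ℕ, ∀ B ∈ part j, ∀ ℓ < numChild j B, child j B ℓ ∈ part (j + 1)
  child_ne : ∀ j : ℕ, ∀ B ∈ part j, ∀ ℓ₁ < numChild j B, ∀ ℓ₂ < numChild j B,
    ℓ₁ ≠ ℓ₂ → child j B ℓ₁ ≠ child j B ℓ₂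
  child_union : ∀ j : ℕ, ∀ B ∈ part j, B = ⋃ ℓ ∈ Finset.range (numChild j B), child j B ℓ
  density : Tendsto (fun j : ℕ => (part j).sup fun B => EMetric.diam B) atTop (nhds 0)

/-- `γ_C = χ_C / √|C|`. -/
noncomputable def gammaFn {X : Type*} [MeasureSpace X] (C : Set X) : X → ℝ :=
  C.indicator fun _ => (Real.sqrt (volume C).toReal)⁻¹

/-- `ψ^{(C,C')} = √(|C'|/|B|) γ_C − √(|C|/|B|) γ_{C'}` for sub-blocks `C, C'` of `B`. -/
noncomputable def psiFn {X : Type*} [MeasureSpace X] (B C C' : Set X) : X → ℝ :=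
  fun x =>
    Real.sqrt ((volume C').toReal / (volume B).toReal) * gammaFn C x -
      Real.sqrt ((volume C).toReal / (volume B).toReal) * gammaFn C' x



section Aux
open Finset

lemma lagrange_identity (s t : ℕ → ℝ) (n : ℕ) :
    ∑ j ∈ Finset.range n, ∑ i ∈ Finset.range j, (s j * t i - s i * t j) ^ 2 =
      (∑ i ∈ Finset.range n, s i ^ 2) * (∑ i ∈ Finset.range n, t i ^ 2) -
        (∑ i ∈ Finset.range n, s i * t i) ^ 2 := by
  induction n with
  | zero => simp
  | succ n ih =>
    rw [Finset.sum_range_succ, Finset.sum_range_succ (fun i => s i ^ 2),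
      Finset.sum_range_succ (fun i => t i ^ 2), Finset.sum_range_succ (fun i => s i * t i), ih]
    have h : ∀ i, (s n * t i - s i * t n) ^ 2 =
        s n ^ 2 * t i ^ 2 + t n ^ 2 * s i ^ 2 - 2 * (s n * t n) * (s i * t i) := by
      intro i; ring
    simp_rw [h]
    rw [Finset.sum_sub_distrib, Finset.sum_add_distrib, ← Finset.mul_sum, ← Finset.mul_sum,
      ← Finset.mul_sum]
    ring

lemma integral_biUnion_finset_ae {α : Type*} [MeasurableSpace α] {μ : Measure α}
    {f : α → ℝ} (s : Finset ℕ) (t : ℕ → Set α)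
    (hm : ∀ i ∈ s, MeasurableSet (t i))
    (hd : ∀ i ∈ s, ∀ j ∈ s, i ≠ j → μ (t i ∩ t j) = 0)
    (hi : ∀ i ∈ s, IntegrableOn f (t i) μ) :
    ∫ x in ⋃ i ∈ s, t i, f x ∂μ = ∑ i ∈ s, ∫ x in t i, f x ∂μ := by
  classical
  induction s using Finset.induction with
  | empty => simp
  | @insert a s ha ih =>
    rw [Finset.set_biUnion_insert, Finset.sum_insert ha]
    have hdisj : AEDisjoint μ (t a) (⋃ i ∈ s, t i) := by
      have : t a ∩ ⋃ i ∈ s, t i = ⋃ i ∈ s, t a ∩ t i := by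
        rw [Set.inter_iUnion₂]
      unfold AEDisjoint
      rw [this]
      refine le_antisymm ?_ zero_le
      calc μ (⋃ i ∈ s, t a ∩ t i) ≤ ∑ i ∈ s, μ (t a ∩ t i) := measure_biUnion_finset_le s _
        _ = 0 := by
          refine Finset.sum_eq_zero fun i hi' => ?_
          exact hd a (Finset.mem_insert_self a s) i (Finset.mem_insert_of_mem hi')
            (fun h => ha (h ▸ hi'))
    rw [integral_union_ae hdisj
      ((MeasurableSet.biUnion s.countable_toSet fun i hi' => hm i (Finset.mem_insert_of_mem hi')).nullMeasurableSet)
      (hi a (Finset.mem_insert_self a s))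
      ((integrableOn_finset_iUnion).2 fun i hi' => hi i (Finset.mem_insert_of_mem hi'))]
    rw [ih (fun i hi' => hm i (Finset.mem_insert_of_mem hi'))
      (fun i hi' j hj' hij => hd i (Finset.mem_insert_of_mem hi') j (Finset.mem_insert_of_mem hj') hij)
      (fun i hi' => hi i (Finset.mem_insert_of_mem hi'))]

lemma integral_sq_le_of_eLpNorm_le {α : Type*} [MeasurableSpace α] {μ : Measure α}
    {u : α → ℝ} (hu : MemLp u 2 μ) {b : ℝ} (hb : 0 ≤ b)
    (h : eLpNorm u 2 μ ≤ ENNReal.ofReal b) :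
    ∫ x, u x ^ 2 ∂μ ≤ b ^ 2 := by
  have h1 : ∫ x, u x ^ 2 ∂μ = ((eLpNorm u 2 μ) ^ 2).toReal := by
    rw [eLpNorm_eq_lintegral_rpow_enorm_toReal two_ne_zero ENNReal.ofNat_ne_top]
    rw [integral_eq_lintegral_of_nonneg_ae (Filter.Eventually.of_forall fun x => sq_nonneg _)
      ((hu.aestronglyMeasurable.aemeasurable.pow_const 2).aestronglyMeasurable)]
    congr 1
    rw [← ENNReal.rpow_natCast _ 2, ← ENNReal.rpow_mul]
    norm_num
    refine lintegral_congr fun x => ?_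
    rw [← sq_abs, ENNReal.ofReal_pow (abs_nonneg _), Real.enorm_eq_ofReal_abs]
  rw [h1]
  calc ((eLpNorm u 2 μ) ^ 2).toReal ≤ ((ENNReal.ofReal b) ^ 2).toReal := by
        apply ENNReal.toReal_mono
        · exact ENNReal.pow_ne_top ENNReal.ofReal_ne_top
        · exact pow_le_pow_left' h 2
    _ = b ^ 2 := by
        rw [← ENNReal.ofReal_pow hb, ENNReal.toReal_ofReal (by positivity)]

section Main

variable {X : Type*} [MeasureSpace X] [PseudoEMetricSpace X] {K : Set X}
  (P : HierarchicalPartition X K)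

namespace HierarchicalPartition

lemma subset_K {j : ℕ} {B : Set X} (hB : B ∈ P.part j) : B ⊆ K := by
  conv_rhs => rw [← P.cover j]
  exact fun x hx => Set.mem_iUnion₂.2 ⟨B, hB, hx⟩

lemma child_subset {j : ℕ} {B : Set X} (hB : B ∈ P.part j) {ℓ : ℕ}
    (hl : ℓ < P.numChild j B) : P.child j B ℓ ⊆ B := by
  conv_rhs => rw [P.child_union j B hB]
  exact fun x hx => Set.mem_iUnion₂.2 ⟨ℓ, Finset.mem_range.2 hl, hx⟩

lemma vol_ne_top (hfin : volume K ≠ ⊤) {j : ℕ} {B : Set X} (hB : B ∈ P.part j) :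
    volume B ≠ ⊤ :=
  (lt_of_le_of_lt (measure_mono (P.subset_K hB)) hfin.lt_top).ne

lemma volR_pos (hfin : volume K ≠ ⊤) {j : ℕ} {B : Set X} (hB : B ∈ P.part j) :
    0 < (volume B).toReal :=
  ENNReal.toReal_pos (P.pos j B hB).ne' (P.vol_ne_top hfin hB)

/-- The measure of a block is the sum of the measures of its children. -/
lemma vol_children (hfin : volume K ≠ ⊤) {j : ℕ} {B : Set X} (hB : B ∈ P.part j) :
    (volume B).toReal =
      ∑ ℓ ∈ Finset.range (P.numChild j B), (volume (P.child j B ℓ)).toReal := by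
  have h1 : volume B = ∑ ℓ ∈ Finset.range (P.numChild j B), volume (P.child j B ℓ) := by
    conv_lhs => rw [P.child_union j B hB]
    refine measure_biUnion_finset₀ ?_ ?_
    · intro ℓ₁ h₁ ℓ₂ h₂ hne
      exact P.null_inter (j+1) _ (P.child_mem j B hB ℓ₁ (Finset.mem_range.1 h₁)) _
        (P.child_mem j B hB ℓ₂ (Finset.mem_range.1 h₂))
        (P.child_ne j B hB ℓ₁ (Finset.mem_range.1 h₁) ℓ₂ (Finset.mem_range.1 h₂) hne)
    · intro ℓ hℓ
      exact (P.measurableSet (j+1) _ (P.child_mem j B hB ℓ (Finset.mem_range.1 hℓ))).nullMeasurableSet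
  rw [h1, ENNReal.toReal_sum]
  intro ℓ hℓ
  exact P.vol_ne_top hfin (P.child_mem j B hB ℓ (Finset.mem_range.1 hℓ))

/-- The integral over a block is the sum of the integrals over its children. -/
lemma integral_children {f : X → ℝ} (hfK : IntegrableOn f K volume)
    {j : ℕ} {B : Set X} (hB : B ∈ P.part j) :
    ∫ x in B, f x = ∑ ℓ ∈ Finset.range (P.numChild j B), ∫ x in P.child j B ℓ, f x := by
  conv_lhs => rw [P.child_union j B hB]
  refine integral_biUnion_finset_ae _ _ ?_ ?_ ?_
  · intro ℓ hℓ
    exact P.measurableSet (j+1) _ (P.child_mem j B hB ℓ (Finset.mem_range.1 hℓ))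
  · intro ℓ₁ h₁ ℓ₂ h₂ hne
    exact P.null_inter (j+1) _ (P.child_mem j B hB ℓ₁ (Finset.mem_range.1 h₁)) _
      (P.child_mem j B hB ℓ₂ (Finset.mem_range.1 h₂))
      (P.child_ne j B hB ℓ₁ (Finset.mem_range.1 h₁) ℓ₂ (Finset.mem_range.1 h₂) hne)
  · intro ℓ hℓ
    exact hfK.mono_set (Set.Subset.trans
      (P.child_subset hB (Finset.mem_range.1 hℓ)) (P.subset_K hB))

end HierarchicalPartition
end Main

section Inner

variable {X : Type*} [MeasureSpace X] {K : Set X}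

lemma restrict_restrict_of_subset {C : Set X} (hC : MeasurableSet C) (hCK : C ⊆ K) :
    (volume.restrict K).restrict C = volume.restrict C := by
  rw [Measure.restrict_restrict hC, Set.inter_eq_self_of_subset_left hCK]

lemma integrable_mul_indicator_const {f : X → ℝ} (hfK : IntegrableOn f K volume)
    {C : Set X} (hC : MeasurableSet C) (hCK : C ⊆ K) (k : ℝ) :
    Integrable (fun x => f x * C.indicator (fun _ => k) x) (volume.restrict K) := by
  have hpt : (fun x => f x * C.indicator (fun _ => k) x) = C.indicator (fun y => f y * k) := by
    funext x; by_cases h : x ∈ C <;> simp [h]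
  rw [hpt, integrable_indicator_iff hC]
  unfold IntegrableOn
  rw [restrict_restrict_of_subset hC hCK]
  exact (hfK.mono_set hCK).mul_const k

lemma integral_mul_indicator_const {f : X → ℝ} (hfK : IntegrableOn f K volume)
    {C : Set X} (hC : MeasurableSet C) (hCK : C ⊆ K) (k : ℝ) :
    ∫ x, f x * C.indicator (fun _ => k) x ∂(volume.restrict K) = k * ∫ x in C, f x := by
  have hpt : (fun x => f x * C.indicator (fun _ => k) x) = C.indicator (fun y => f y * k) := by
    funext x; by_cases h : x ∈ C <;> simp [h]
  rw [hpt, integral_indicator hC, restrict_restrict_of_subset hC hCK]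
  rw [integral_mul_const, mul_comm]

lemma integrable_mul_const_gamma {f : X → ℝ} (hfK : IntegrableOn f K volume)
    {C : Set X} (hC : MeasurableSet C) (hCK : C ⊆ K) (a : ℝ) :
    Integrable (fun x => f x * (a * gammaFn C x)) (volume.restrict K) := by
  have hpt : (fun x => f x * (a * gammaFn C x)) =
      fun x => f x * C.indicator (fun _ => a * (Real.sqrt (volume C).toReal)⁻¹) x := by
    funext x; unfold gammaFn; by_cases h : x ∈ C <;> simp [h]
  rw [hpt]
  exact integrable_mul_indicator_const hfK hC hCK _

lemma integral_mul_const_gamma {f : X → ℝ} (hfK : IntegrableOn f K volume)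
    {C : Set X} (hC : MeasurableSet C) (hCK : C ⊆ K) (a : ℝ) :
    ∫ x, f x * (a * gammaFn C x) ∂(volume.restrict K) =
      a * ((∫ x in C, f x) * (Real.sqrt (volume C).toReal)⁻¹) := by
  have hpt : (fun x => f x * (a * gammaFn C x)) =
      fun x => f x * C.indicator (fun _ => a * (Real.sqrt (volume C).toReal)⁻¹) x := by
    funext x; unfold gammaFn; by_cases h : x ∈ C <;> simp [h]
  calc ∫ x, f x * (a * gammaFn C x) ∂(volume.restrict K)
      = ∫ x, f x * C.indicator (fun _ => a * (Real.sqrt (volume C).toReal)⁻¹) x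
          ∂(volume.restrict K) := by rw [hpt]
    _ = a * (Real.sqrt (volume C).toReal)⁻¹ * ∫ x in C, f x :=
        integral_mul_indicator_const hfK hC hCK _
    _ = a * ((∫ x in C, f x) * (Real.sqrt (volume C).toReal)⁻¹) := by ring

lemma integral_mul_psi {f : X → ℝ} (hfK : IntegrableOn f K volume)
    {B C C' : Set X} (hC : MeasurableSet C) (hC' : MeasurableSet C')
    (hCK : C ⊆ K) (hC'K : C' ⊆ K) :
    ∫ x, f x * psiFn B C C' x ∂(volume.restrict K) =
      (Real.sqrt (volume C').toReal * ((∫ x in C, f x) * (Real.sqrt (volume C).toReal)⁻¹) -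
        Real.sqrt (volume C).toReal * ((∫ x in C', f x) * (Real.sqrt (volume C').toReal)⁻¹)) *
      (Real.sqrt (volume B).toReal)⁻¹ := by
  have hpt : (fun x => f x * psiFn B C C' x) =
      fun x => f x * (Real.sqrt ((volume C').toReal / (volume B).toReal) * gammaFn C x) -
        f x * (Real.sqrt ((volume C).toReal / (volume B).toReal) * gammaFn C' x) := by
    funext x; unfold psiFn; ring
  rw [hpt, integral_sub (integrable_mul_const_gamma hfK hC hCK _)
      (integrable_mul_const_gamma hfK hC' hC'K _),
    integral_mul_const_gamma hfK hC hCK _, integral_mul_const_gamma hfK hC' hC'K _,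
    Real.sqrt_div ENNReal.toReal_nonneg, Real.sqrt_div ENNReal.toReal_nonneg]
  field_simp

end Inner

namespace HierarchicalPartition

variable {X : Type*} [MeasureSpace X] [PseudoEMetricSpace X] {K : Set X}
  (P : HierarchicalPartition X K)

lemma block_sum (hfin : volume K ≠ ⊤) {f : X → ℝ} (hfK : IntegrableOn f K volume)
    {j : ℕ} {B : Set X} (hB : B ∈ P.part j) :
    ∑ ℓ₂ ∈ Finset.range (P.numChild j B), ∑ ℓ₁ ∈ Finset.range ℓ₂,
        (∫ x, f x * psiFn B (P.child j B ℓ₁) (P.child j B ℓ₂) x ∂(volume.restrict K)) ^ 2 =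
      (∑ ℓ ∈ Finset.range (P.numChild j B),
          (∫ x in P.child j B ℓ, f x) ^ 2 / (volume (P.child j B ℓ)).toReal) -
        (∫ x in B, f x) ^ 2 / (volume B).toReal := by
  classical
  set c := P.numChild j B with hc
  set s : ℕ → ℝ := fun ℓ => Real.sqrt (volume (P.child j B ℓ)).toReal with hs
  set t : ℕ → ℝ := fun ℓ =>
    (∫ x in P.child j B ℓ, f x) * (Real.sqrt (volume (P.child j B ℓ)).toReal)⁻¹ with ht
  have hVpos : 0 < (volume B).toReal := P.volR_pos hfin hB
  have hchild : ∀ ℓ < c, P.child j B ℓ ∈ P.part (j + 1) := fun ℓ hℓ => P.child_mem j B hB ℓ hℓ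
  have hvpos : ∀ ℓ < c, 0 < (volume (P.child j B ℓ)).toReal := fun ℓ hℓ =>
    P.volR_pos hfin (hchild ℓ hℓ)
  -- Step 1: rewrite each inner product
  have step1 : ∑ ℓ₂ ∈ Finset.range c, ∑ ℓ₁ ∈ Finset.range ℓ₂,
      (∫ x, f x * psiFn B (P.child j B ℓ₁) (P.child j B ℓ₂) x ∂(volume.restrict K)) ^ 2 =
      ∑ ℓ₂ ∈ Finset.range c, ∑ ℓ₁ ∈ Finset.range ℓ₂,
        ((s ℓ₂ * t ℓ₁ - s ℓ₁ * t ℓ₂) * (Real.sqrt (volume B).toReal)⁻¹) ^ 2 := by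
    refine Finset.sum_congr rfl fun ℓ₂ h₂ => Finset.sum_congr rfl fun ℓ₁ h₁ => ?_
    have h₂' : ℓ₂ < c := Finset.mem_range.1 h₂
    have h₁' : ℓ₁ < c := lt_trans (Finset.mem_range.1 h₁) h₂'
    rw [integral_mul_psi hfK
      (P.measurableSet (j+1) _ (hchild ℓ₁ h₁')) (P.measurableSet (j+1) _ (hchild ℓ₂ h₂'))
      ((P.child_subset hB h₁').trans (P.subset_K hB))
      ((P.child_subset hB h₂').trans (P.subset_K hB))]
  rw [step1]
  have step2 : ∑ ℓ₂ ∈ Finset.range c, ∑ ℓ₁ ∈ Finset.range ℓ₂,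
      ((s ℓ₂ * t ℓ₁ - s ℓ₁ * t ℓ₂) * (Real.sqrt (volume B).toReal)⁻¹) ^ 2 =
      ((∑ ℓ ∈ Finset.range c, s ℓ ^ 2) * (∑ ℓ ∈ Finset.range c, t ℓ ^ 2) -
        (∑ ℓ ∈ Finset.range c, s ℓ * t ℓ) ^ 2) * ((Real.sqrt (volume B).toReal)⁻¹) ^ 2 := by
    simp_rw [mul_pow, ← Finset.sum_mul]
    rw [lagrange_identity]
  rw [step2]
  have hssq : ∀ ℓ, s ℓ ^ 2 = (volume (P.child j B ℓ)).toReal := fun ℓ =>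
    Real.sq_sqrt ENNReal.toReal_nonneg
  have hsum_s : ∑ ℓ ∈ Finset.range c, s ℓ ^ 2 = (volume B).toReal := by
    simp_rw [hssq]; exact (P.vol_children hfin hB).symm
  have hsum_t : ∑ ℓ ∈ Finset.range c, t ℓ ^ 2 =
      ∑ ℓ ∈ Finset.range c, (∫ x in P.child j B ℓ, f x) ^ 2 / (volume (P.child j B ℓ)).toReal := by
    refine Finset.sum_congr rfl fun ℓ hℓ => ?_
    rw [ht]
    simp only
    rw [mul_pow, inv_pow, hssq ℓ]
    rfl
  have hsum_st : ∑ ℓ ∈ Finset.range c, s ℓ * t ℓ = ∫ x in B, f x := by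
    rw [P.integral_children hfK hB]
    refine Finset.sum_congr rfl fun ℓ hℓ => ?_
    have hvp := hvpos ℓ (Finset.mem_range.1 hℓ)
    rw [hs, ht]
    simp only
    rw [mul_comm, mul_assoc, inv_mul_cancel₀ (Real.sqrt_ne_zero'.2 hvp), mul_one]
  rw [hsum_s, hsum_t, hsum_st, inv_pow, Real.sq_sqrt ENNReal.toReal_nonneg]
  field_simp

end HierarchicalPartition

namespace HierarchicalPartition

variable {X : Type*} [MeasureSpace X] [PseudoEMetricSpace X] {K : Set X}
  (P : HierarchicalPartition X K)

/-- Two distinct children (possibly of different parents) are distinct sets. -/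
lemma child_injective {j : ℕ} {B B' : Set X} (hB : B ∈ P.part j) (hB' : B' ∈ P.part j)
    {ℓ ℓ' : ℕ} (hℓ : ℓ < P.numChild j B) (hℓ' : ℓ' < P.numChild j B' )
    (h : P.child j B ℓ = P.child j B' ℓ') : B = B' ∧ ℓ = ℓ' := by
  have hBB' : B = B' := by
    by_contra hne
    have h1 : P.child j B ℓ ⊆ B ∩ B' := by
      refine Set.subset_inter (P.child_subset hB hℓ) ?_
      rw [h]; exact P.child_subset hB' hℓ'
    have h2 : volume (P.child j B ℓ) = 0 :=
      le_antisymm (le_trans (measure_mono h1) (P.null_inter j B hB B' hB' hne).le) zero_le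
    exact absurd h2 (P.pos (j+1) _ (P.child_mem j B hB ℓ hℓ)).ne'
  subst hBB'
  refine ⟨rfl, ?_⟩
  by_contra hne
  exact P.child_ne j B hB ℓ hℓ ℓ' hℓ' hne h

/-- Every block at level `j+1` is a child of some block at level `j`. -/
lemma child_surjective {j : ℕ} {B' : Set X} (hB' : B' ∈ P.part (j + 1)) :
    ∃ B ∈ P.part j, ∃ ℓ < P.numChild j B, P.child j B ℓ = B' := by
  by_contra hcon
  push_neg at hcon
  have hne : ∀ B ∈ P.part j, ∀ ℓ < P.numChild j B, P.child j B ℓ ≠ B' := hcon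
  -- B' is covered by the union of all children, each intersecting B' in a null set
  have hsub : B' ⊆ ⋃ B ∈ P.part j, ⋃ ℓ ∈ Finset.range (P.numChild j B), B' ∩ P.child j B ℓ := by
    intro x hx
    have hxK : x ∈ K := P.subset_K hB' hx
    rw [← P.cover j] at hxK
    obtain ⟨B, hB, hxB⟩ := Set.mem_iUnion₂.1 hxK
    rw [P.child_union j B hB] at hxB
    obtain ⟨ℓ, hℓ, hxC⟩ := Set.mem_iUnion₂.1 hxB
    exact Set.mem_iUnion₂.2 ⟨B, hB, Set.mem_iUnion₂.2 ⟨ℓ, hℓ, ⟨hx, hxC⟩⟩⟩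
  have hnull : volume B' = 0 := by
    refine le_antisymm (le_trans (measure_mono hsub) ?_) zero_le
    calc volume (⋃ B ∈ P.part j, ⋃ ℓ ∈ Finset.range (P.numChild j B), B' ∩ P.child j B ℓ)
        ≤ ∑ B ∈ P.part j, volume (⋃ ℓ ∈ Finset.range (P.numChild j B), B' ∩ P.child j B ℓ) :=
          measure_biUnion_finset_le _ _
      _ ≤ ∑ B ∈ P.part j, ∑ ℓ ∈ Finset.range (P.numChild j B), volume (B' ∩ P.child j B ℓ) :=
          Finset.sum_le_sum fun B hB => measure_biUnion_finset_le _ _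
      _ = 0 := by
          refine Finset.sum_eq_zero fun B hB => Finset.sum_eq_zero fun ℓ hℓ => ?_
          exact P.null_inter (j+1) B' hB' _
            (P.child_mem j B hB ℓ (Finset.mem_range.1 hℓ))
            (Ne.symm (hne B hB ℓ (Finset.mem_range.1 hℓ)))
  exact absurd hnull (P.pos (j+1) B' hB').ne'

/-- Reindexing a sum over all children at level `j` as a sum over level `j+1`. -/
lemma sum_children_eq (g : Set X → ℝ) (j : ℕ) :
    ∑ B ∈ P.part j, ∑ ℓ ∈ Finset.range (P.numChild j B), g (P.child j B ℓ) =
      ∑ B' ∈ P.part (j + 1), g B' := by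
  classical
  rw [Finset.sum_sigma']
  refine Finset.sum_bij (fun p hp => P.child j p.1 p.2) ?_ ?_ ?_ ?_
  · rintro ⟨B, ℓ⟩ hp
    rw [Finset.mem_sigma] at hp
    exact P.child_mem j B hp.1 ℓ (Finset.mem_range.1 hp.2)
  · rintro ⟨B, ℓ⟩ hp ⟨B', ℓ'⟩ hp' h
    rw [Finset.mem_sigma] at hp hp'
    obtain ⟨h1, h2⟩ := P.child_injective hp.1 hp'.1 (Finset.mem_range.1 hp.2)
      (Finset.mem_range.1 hp'.2) h
    subst h1; subst h2; rfl
  · intro B' hB'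
    obtain ⟨B, hB, ℓ, hℓ, hEq⟩ := P.child_surjective hB'
    exact ⟨⟨B, ℓ⟩, Finset.mem_sigma.2 ⟨hB, Finset.mem_range.2 hℓ⟩, hEq⟩
  · intro p hp; rfl

end HierarchicalPartition

namespace HierarchicalPartition

variable {X : Type*} [MeasureSpace X] [PseudoEMetricSpace X] {K : Set X}
  (P : HierarchicalPartition X K)

/-- The sum `E_N = ∑_B (∫_B f)² / |B|`. -/
noncomputable def enSum (f : X → ℝ) (N : ℕ) : ℝ :=
  ∑ B ∈ P.part N, (∫ x in B, f x) ^ 2 / (volume B).toReal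

/-- The projection of `f` onto the span of the indicators of the blocks at level `N`. -/
noncomputable def proj (f : X → ℝ) (N : ℕ) : X → ℝ := fun x =>
  ∑ B ∈ P.part N, B.indicator (fun _ => (∫ y in B, f y) / (volume B).toReal) x

lemma proj_sub (f g : X → ℝ) (hf : IntegrableOn f K volume) (hg : IntegrableOn g K volume)
    (N : ℕ) : P.proj (f - g) N = P.proj f N - P.proj g N := by
  funext x
  simp only [proj, Pi.sub_apply, ← Finset.sum_sub_distrib]
  refine Finset.sum_congr rfl fun B hB => ?_
  have hint : ∫ y in B, (f y - g y) = (∫ y in B, f y) - ∫ y in B, g y :=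
    integral_sub (hf.mono_set (P.subset_K hB)) (hg.mono_set (P.subset_K hB))
  by_cases h : x ∈ B <;> simp [h, hint, sub_div]

lemma memLp_proj (hfin : volume K ≠ ⊤) (f : X → ℝ) (N : ℕ) :
    MemLp (P.proj f N) 2 (volume.restrict K) := by
  haveI : Fact (volume K < ⊤) := ⟨hfin.lt_top⟩
  exact memLp_finset_sum _ fun B hB =>
    memLp_indicator_const 2 (P.measurableSet N B hB) _ (Or.inr (measure_ne_top _ _))

lemma integrable_mul_proj {f : X → ℝ} (hfK : IntegrableOn f K volume) (N : ℕ) :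
    Integrable (fun x => f x * P.proj f N x) (volume.restrict K) := by
  simp only [proj, Finset.mul_sum]
  exact integrable_finset_sum _ fun B hB =>
    integrable_mul_indicator_const hfK (P.measurableSet N B hB) (P.subset_K hB) _

lemma integral_mul_proj {f : X → ℝ} (hfin : volume K ≠ ⊤) (hfK : IntegrableOn f K volume)
    (N : ℕ) : ∫ x, f x * P.proj f N x ∂(volume.restrict K) = P.enSum f N := by
  simp only [proj, Finset.mul_sum]
  rw [integral_finset_sum _ fun B hB =>
    integrable_mul_indicator_const hfK (P.measurableSet N B hB) (P.subset_K hB) _]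
  refine Finset.sum_congr rfl fun B hB => ?_
  rw [integral_mul_indicator_const hfK (P.measurableSet N B hB) (P.subset_K hB)]
  have := (P.volR_pos hfin hB).ne'
  field_simp

lemma integral_proj_sq (hfin : volume K ≠ ⊤) (hKm : MeasurableSet K) (f : X → ℝ) (N : ℕ) :
    ∫ x, (P.proj f N x) ^ 2 ∂(volume.restrict K) = P.enSum f N := by
  classical
  haveI : Fact (volume K < ⊤) := ⟨hfin.lt_top⟩
  have hpt : ∀ x, (P.proj f N x) ^ 2 = ∑ B ∈ P.part N, ∑ B' ∈ P.part N,
      (B ∩ B').indicator (fun _ => ((∫ y in B, f y) / (volume B).toReal) *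
        ((∫ y in B', f y) / (volume B').toReal)) x := by
    intro x
    rw [sq, proj, Finset.sum_mul_sum]
    refine Finset.sum_congr rfl fun B hB => Finset.sum_congr rfl fun B' hB' => ?_
    by_cases h : x ∈ B <;> by_cases h' : x ∈ B' <;>
      simp [Set.indicator, h, h']
  simp_rw [hpt]
  rw [integral_finset_sum _ fun B hB => integrable_finset_sum _ fun B' hB' =>
    (integrable_const _).indicator ((P.measurableSet N B hB).inter (P.measurableSet N B' hB'))]
  refine Finset.sum_congr rfl fun B hB => ?_
  rw [integral_finset_sum _ fun B' hB' =>
    (integrable_const _).indicator ((P.measurableSet N B hB).inter (P.measurableSet N B' hB'))]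
  rw [Finset.sum_eq_single_of_mem B hB]
  · rw [integral_indicator_const _ ((P.measurableSet N B hB).inter (P.measurableSet N B hB)),
      Set.inter_self, Measure.real, Measure.restrict_apply (P.measurableSet N B hB),
      Set.inter_eq_self_of_subset_left (P.subset_K hB)]
    have hV := (P.volR_pos hfin hB).ne'
    rw [smul_eq_mul]
    field_simp
  · intro B' hB' hne
    rw [integral_indicator_const _ ((P.measurableSet N B hB).inter (P.measurableSet N B' hB'))]
    have h0 : (volume.restrict K) (B ∩ B') = 0 := by
      refine le_antisymm (le_trans (Measure.restrict_apply_le _ _) ?_) zero_le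
      rw [P.null_inter N B hB B' hB' (Ne.symm hne)]
    rw [Measure.real, h0]
    simp
end HierarchicalPartition

namespace HierarchicalPartition

variable {X : Type*} [MeasureSpace X] [PseudoEMetricSpace X] {K : Set X}
  (P : HierarchicalPartition X K)

lemma integral_sub_proj_sq (hfin : volume K ≠ ⊤) (hKm : MeasurableSet K)
    {f : X → ℝ} (hf : MemLp f 2 (volume.restrict K)) (N : ℕ) :
    ∫ x, (f x - P.proj f N x) ^ 2 ∂(volume.restrict K) =
      (∫ x, f x ^ 2 ∂(volume.restrict K)) - P.enSum f N := by
  haveI : Fact (volume K < ⊤) := ⟨hfin.lt_top⟩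
  have hfK : IntegrableOn f K volume := hf.integrable one_le_two
  have h1 : Integrable (fun x => f x ^ 2) (volume.restrict K) := hf.integrable_sq
  have h2 : Integrable (fun x => f x * P.proj f N x) (volume.restrict K) :=
    P.integrable_mul_proj hfK N
  have h3 : Integrable (fun x => (P.proj f N x) ^ 2) (volume.restrict K) :=
    (P.memLp_proj hfin f N).integrable_sq
  have hpt : (fun x => (f x - P.proj f N x) ^ 2) =
      fun x => (f x ^ 2 - 2 * (f x * P.proj f N x)) + (P.proj f N x) ^ 2 := by
    funext x; ring
  have e1 : ∫ x, ((f x ^ 2 - 2 * (f x * P.proj f N x)) + (P.proj f N x) ^ 2)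
        ∂(volume.restrict K) =
      (∫ x, (f x ^ 2 - 2 * (f x * P.proj f N x)) ∂(volume.restrict K)) +
        ∫ x, (P.proj f N x) ^ 2 ∂(volume.restrict K) :=
    integral_add (h1.sub (h2.const_mul 2)) h3
  have e2 : ∫ x, (f x ^ 2 - 2 * (f x * P.proj f N x)) ∂(volume.restrict K) =
      (∫ x, f x ^ 2 ∂(volume.restrict K)) -
        ∫ x, 2 * (f x * P.proj f N x) ∂(volume.restrict K) :=
    integral_sub h1 (h2.const_mul 2)
  rw [hpt, e1, e2, integral_const_mul, P.integral_mul_proj hfin hfK N,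
    P.integral_proj_sq hfin hKm f N]
  ring

lemma enSum_le (hfin : volume K ≠ ⊤) (hKm : MeasurableSet K)
    {f : X → ℝ} (hf : MemLp f 2 (volume.restrict K)) (N : ℕ) :
    P.enSum f N ≤ ∫ x, f x ^ 2 ∂(volume.restrict K) := by
  have h := P.integral_sub_proj_sq hfin hKm hf N
  have h0 : 0 ≤ ∫ x, (f x - P.proj f N x) ^ 2 ∂(volume.restrict K) :=
    integral_nonneg fun x => sq_nonneg _
  linarith

end HierarchicalPartition

namespace HierarchicalPartition

variable {X : Type*} [MeasureSpace X] [PseudoEMetricSpace X] {K : Set X}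
  (P : HierarchicalPartition X K)

lemma proj_close_of_uniformContinuous (hfin : volume K ≠ ⊤) (hKm : MeasurableSet K)
    {h : X → ℝ} (hu : UniformContinuous h) (hb : MemLp h 2 (volume.restrict K))
    {ε : ℝ} (hε : 0 < ε) :
    ∀ᶠ N in Filter.atTop, ∫ x, (h x - P.proj h N x) ^ 2 ∂(volume.restrict K) ≤ ε := by
  classical
  haveI : Fact (volume K < ⊤) := ⟨hfin.lt_top⟩
  have hhK : IntegrableOn h K volume := hb.integrable one_le_two
  set c : ℝ := Real.sqrt (ε / ((volume K).toReal + 1)) with hcdef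
  have hVK : (0:ℝ) ≤ (volume K).toReal := ENNReal.toReal_nonneg
  have hc : 0 < c := Real.sqrt_pos.2 (div_pos hε (by linarith))
  have hcsq : c ^ 2 = ε / ((volume K).toReal + 1) :=
    Real.sq_sqrt (le_of_lt (div_pos hε (by linarith)))
  have hcK : c ^ 2 * (volume K).toReal ≤ ε := by
    rw [hcsq, div_mul_eq_mul_div, div_le_iff₀ (by linarith)]
    nlinarith
  obtain ⟨δ, hδpos, hδ⟩ := EMetric.uniformContinuous_iff.1 hu (ENNReal.ofReal c)
    (ENNReal.ofReal_pos.2 hc)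
  filter_upwards [P.density.eventually_lt_const hδpos] with N hN
  -- almost everywhere, `x` lies in exactly one block of level `N`
  set Z : Set X := ⋃ p ∈ (P.part N ×ˢ P.part N).filter (fun p => p.1 ≠ p.2), p.1 ∩ p.2 with hZdef
  have hZnull : volume Z = 0 := by
    refine le_antisymm (le_trans (measure_biUnion_finset_le _ _) ?_) zero_le
    rw [Finset.sum_eq_zero]
    rintro ⟨B, B'⟩ hp
    rw [Finset.mem_filter, Finset.mem_product] at hp
    exact P.null_inter N B hp.1.1 B' hp.1.2 hp.2
  have hae : ∀ᵐ x ∂(volume.restrict K), |h x - P.proj h N x| ≤ c := by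
    filter_upwards [ae_restrict_mem hKm,
      ae_restrict_of_ae (measure_eq_zero_iff_ae_notMem.1 hZnull)] with x hxK hxZ
    obtain ⟨B, hB, hxB⟩ : ∃ B ∈ P.part N, x ∈ B := by
      rw [← P.cover N] at hxK
      obtain ⟨B, hB, hxB⟩ := Set.mem_iUnion₂.1 hxK
      exact ⟨B, hB, hxB⟩
    have hproj : P.proj h N x = (∫ y in B, h y) / (volume B).toReal := by
      rw [proj, Finset.sum_eq_single_of_mem B hB]
      · simp [hxB]
      · intro B' hB' hne
        have hxB' : x ∉ B' := fun hx' => hxZ (Set.mem_iUnion₂.2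
          ⟨(B', B), Finset.mem_filter.2 ⟨Finset.mem_product.2 ⟨hB', hB⟩, hne⟩, ⟨hx', hxB⟩⟩)
        simp [hxB']
    have hV : 0 < (volume B).toReal := P.volR_pos hfin hB
    have hBfin : volume B ≠ ⊤ := P.vol_ne_top hfin hB
    haveI : Fact (volume B < ⊤) := ⟨hBfin.lt_top⟩
    have hintB : IntegrableOn h B volume := hhK.mono_set (P.subset_K hB)
    have hnum : ∫ y in B, (h x - h y) = (volume B).toReal * h x - ∫ y in B, h y := by
      rw [integral_sub (integrableOn_const (C := h x) hBfin) hintB,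
        setIntegral_const, smul_eq_mul, Measure.real]
    have hbound : |∫ y in B, (h x - h y)| ≤ c * (volume B).toReal := by
      have := norm_integral_le_of_norm_le_const (μ := volume.restrict B)
        (f := fun y => h x - h y) (C := c) ?_
      · rw [Real.norm_eq_abs] at this
        calc |∫ y in B, (h x - h y)| ≤ c * ((volume.restrict B) Set.univ).toReal := this
          _ = c * (volume B).toReal := by rw [Measure.restrict_apply_univ]
      · refine (ae_restrict_iff' (P.measurableSet N B hB)).2
          (Filter.Eventually.of_forall fun y hy => ?_)
        have hdist : edist x y < δ :=
          lt_of_le_of_lt (le_trans (EMetric.edist_le_diam_of_mem hxB hy)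
            (Finset.le_sup hB)) hN
        have := hδ hdist
        rw [edist_dist, ENNReal.ofReal_lt_ofReal_iff hc] at this
        rw [Real.norm_eq_abs, ← Real.dist_eq]
        exact this.le
    have heq : h x - (∫ y in B, h y) / (volume B).toReal =
        (∫ y in B, (h x - h y)) / (volume B).toReal := by
      rw [hnum]; field_simp
    rw [hproj, heq, abs_div, abs_of_pos hV, div_le_iff₀ hV]
    exact hbound
  -- conclude
  have hint_sq : Integrable (fun x => (h x - P.proj h N x) ^ 2) (volume.restrict K) := by
    have := (hb.sub (P.memLp_proj hfin h N)).integrable_sq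
    simpa [Pi.sub_apply] using this
  calc ∫ x, (h x - P.proj h N x) ^ 2 ∂(volume.restrict K)
      ≤ ∫ _x, c ^ 2 ∂(volume.restrict K) := by
        refine integral_mono_ae hint_sq (integrable_const _) ?_
        filter_upwards [hae] with x hx
        have := abs_le.1 hx
        nlinarith [this.1, this.2]
    _ = (volume K).toReal * c ^ 2 := by
        rw [integral_const, measureReal_restrict_apply_univ, smul_eq_mul, Measure.real]
    _ ≤ ε := by rw [mul_comm]; exact hcK

end HierarchicalPartition

namespace HierarchicalPartition

variable {d : ℕ} {K : Set (Fin d → ℝ)} (P : HierarchicalPartition (Fin d → ℝ) K)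

lemma exists_uniformContinuous_approx {f : (Fin d → ℝ) → ℝ} (hK : IsCompact K)
    (hf : MemLp f 2 (volume.restrict K)) {ε : ℝ} (hε : 0 < ε) :
    ∃ h : (Fin d → ℝ) → ℝ, UniformContinuous h ∧ MemLp h 2 (volume.restrict K) ∧
      ∫ x, (f x - h x) ^ 2 ∂(volume.restrict K) ≤ ε := by
  have hKm := hK.measurableSet
  set F := K.indicator f with hFdef
  have hF : MemLp F 2 volume := (memLp_indicator_iff_restrict hKm).2 hf
  obtain ⟨g, hgsupp, hgnorm, hgcont, hgmem⟩ :=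
    hF.exists_hasCompactSupport_eLpNorm_sub_le (p := 2) ENNReal.ofNat_ne_top
      (ε := ENNReal.ofReal (Real.sqrt ε))
      (ne_of_gt (ENNReal.ofReal_pos.2 (Real.sqrt_pos.2 hε)))
  have hFg : MemLp (fun x => F x - g x) 2 volume := hF.sub hgmem
  refine ⟨g, hgcont.uniformContinuous_of_tendsto_cocompact hgsupp.is_zero_at_infty,
    hgmem.mono_measure Measure.restrict_le_self, ?_⟩
  have h1 : ∫ x, (f x - g x) ^ 2 ∂(volume.restrict K) =
      ∫ x, (F x - g x) ^ 2 ∂(volume.restrict K) := by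
    refine integral_congr_ae ?_
    filter_upwards [ae_restrict_mem hKm] with x hx
    rw [hFdef, Set.indicator_of_mem hx]
  have h2 : ∫ x, (F x - g x) ^ 2 ∂(volume.restrict K) ≤ ∫ x, (F x - g x) ^ 2 ∂volume :=
    integral_mono_measure Measure.restrict_le_self
      (Filter.Eventually.of_forall fun x => sq_nonneg _) hFg.integrable_sq
  have h3 : ∫ x, (F x - g x) ^ 2 ∂volume ≤ (Real.sqrt ε) ^ 2 := by
    refine integral_sq_le_of_eLpNorm_le hFg (Real.sqrt_nonneg ε) ?_
    have : eLpNorm (fun x => F x - g x) 2 volume = eLpNorm (F - g) 2 volume := rfl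
    rw [this]
    exact hgnorm
  rw [Real.sq_sqrt hε.le] at h3
  linarith

lemma enSum_nonneg (f : (Fin d → ℝ) → ℝ) (N : ℕ) : 0 ≤ P.enSum f N :=
  Finset.sum_nonneg fun B _ => div_nonneg (sq_nonneg _) ENNReal.toReal_nonneg

lemma tendsto_enSum (hK : IsCompact K) {f : (Fin d → ℝ) → ℝ}
    (hf : MemLp f 2 (volume.restrict K)) :
    Filter.Tendsto (fun N => P.enSum f N) Filter.atTop
      (nhds (∫ x, f x ^ 2 ∂(volume.restrict K))) := by
  have hfin : volume K ≠ ⊤ := hK.measure_lt_top.ne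
  have hKm := hK.measurableSet
  haveI : Fact (volume K < ⊤) := ⟨hfin.lt_top⟩
  rw [Metric.tendsto_atTop]
  intro ε hε
  have hε' : 0 < ε / 5 := by linarith
  obtain ⟨h, hu, hmem, happrox⟩ := exists_uniformContinuous_approx hK hf hε'
  have hfK : IntegrableOn f K volume := hf.integrable one_le_two
  have hhK : IntegrableOn h K volume := hmem.integrable one_le_two
  have hfh : MemLp (f - h) 2 (volume.restrict K) := hf.sub hmem
  have key : ∀ᶠ N in Filter.atTop,
      ∫ x, (f x - P.proj f N x) ^ 2 ∂(volume.restrict K) ≤ 4 * (ε / 5) := by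
    filter_upwards [P.proj_close_of_uniformContinuous hfin hKm hu hmem hε'] with N hV2
    have hproj_eq : P.proj (f - h) N = P.proj f N - P.proj h N := P.proj_sub f h hfK hhK N
    set U : (Fin d → ℝ) → ℝ := fun x => (f x - h x) - P.proj (f - h) N x with hUdef
    set V : (Fin d → ℝ) → ℝ := fun x => h x - P.proj h N x with hVdef
    have hUmem : MemLp U 2 (volume.restrict K) :=
      hfh.sub (P.memLp_proj hfin (f - h) N)
    have hVmem : MemLp V 2 (volume.restrict K) :=
      hmem.sub (P.memLp_proj hfin h N)
    have hU2 : ∫ x, U x ^ 2 ∂(volume.restrict K) ≤ ε / 5 := by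
      have e := P.integral_sub_proj_sq hfin hKm hfh N
      have e3 : ∫ x, (f - h) x ^ 2 ∂(volume.restrict K) =
          ∫ x, (f x - h x) ^ 2 ∂(volume.restrict K) := rfl
      have hen := P.enSum_nonneg (f - h) N
      have e2 : ∫ x, ((f - h) x - P.proj (f - h) N x) ^ 2 ∂(volume.restrict K) =
          ∫ x, U x ^ 2 ∂(volume.restrict K) := rfl
      rw [e2, e3] at e
      linarith [happrox]
    have hptUV : ∀ x, f x - P.proj f N x = U x + V x := by
      intro x
      have hpp : P.proj (f - h) N x = P.proj f N x - P.proj h N x := by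
        rw [hproj_eq]; rfl
      simp only [hUdef, hVdef, hpp]; ring
    have hsum : ∫ x, (f x - P.proj f N x) ^ 2 ∂(volume.restrict K) =
        ∫ x, (U x + V x) ^ 2 ∂(volume.restrict K) :=
      integral_congr_ae (Filter.Eventually.of_forall fun x => by
        show (f x - P.proj f N x) ^ 2 = _
        rw [hptUV x])
    have hU2int : Integrable (fun x => U x ^ 2) (volume.restrict K) := hUmem.integrable_sq
    have hV2int : Integrable (fun x => V x ^ 2) (volume.restrict K) := hVmem.integrable_sq
    have hUVint : Integrable (fun x => (U x + V x) ^ 2) (volume.restrict K) :=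
      (hUmem.add hVmem).integrable_sq
    have hmono : ∫ x, (U x + V x) ^ 2 ∂(volume.restrict K) ≤
        ∫ x, (2 * U x ^ 2 + 2 * V x ^ 2) ∂(volume.restrict K) :=
      integral_mono hUVint ((hU2int.const_mul 2).add (hV2int.const_mul 2))
        (fun x => by nlinarith [sq_nonneg (U x - V x)])
    have hsplit : ∫ x, (2 * U x ^ 2 + 2 * V x ^ 2) ∂(volume.restrict K) =
        2 * (∫ x, U x ^ 2 ∂(volume.restrict K)) + 2 * ∫ x, V x ^ 2 ∂(volume.restrict K) := by
      rw [integral_add (hU2int.const_mul 2) (hV2int.const_mul 2), integral_const_mul,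
        integral_const_mul]
    rw [hsum]
    rw [hsplit] at hmono
    linarith [hU2, hV2]
  rw [Filter.eventually_atTop] at key
  obtain ⟨N₀, hN₀⟩ := key
  refine ⟨N₀, fun n hn => ?_⟩
  have hle := P.enSum_le hfin hKm hf n
  have heq := P.integral_sub_proj_sq hfin hKm hf n
  have hb := hN₀ n hn
  have h0 : 0 ≤ ∫ x, (f x - P.proj f n x) ^ 2 ∂(volume.restrict K) :=
    integral_nonneg fun x => sq_nonneg _
  rw [Real.dist_eq, abs_sub_comm, abs_of_nonneg (by linarith)]
  linarith

end HierarchicalPartition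

end Aux

/-- for a compact `K ⊆ ℝ^d` of positive measure and a hierarchical partition
`{B_j}` of `K`, the system `X({B_j}) = {φ₀} ∪ ⋃_j ⋃_{B ∈ B_j} Ψ_{j,B}` is a tight frame with
frame constant 1 for `L²(K)`: for every `f ∈ L²(K)`,
`‖f‖² = |⟨f, φ₀⟩|² + ∑_j ∑_{B ∈ B_j} ∑_{ℓ₁ < ℓ₂ ≤ c_B} |⟨f, ψ_{j,B}^{(ℓ₁,ℓ₂)}⟩|²`. -/
theorem hierarchicalPartition_tight_frame
    {d : ℕ} (K : Set (Fin d → ℝ)) (hK : IsCompact K) (hKpos : 0 < volume K)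
    (P : HierarchicalPartition (Fin d → ℝ) K)
    (f : (Fin d → ℝ) → ℝ) (hf : MemLp f 2 (volume.restrict K)) :
    ∫ x, f x ^ 2 ∂(volume.restrict K) =
      (∫ x, f x * gammaFn K x ∂(volume.restrict K)) ^ 2 +
        ∑' j : ℕ, ∑ B ∈ P.part j, ∑ ℓ₂ ∈ Finset.range (P.numChild j B), ∑ ℓ₁ ∈ Finset.range ℓ₂,
          (∫ x, f x * psiFn B (P.child j B ℓ₁) (P.child j B ℓ₂) x ∂(volume.restrict K)) ^ 2 := by
  classical
  have hfin : volume K ≠ ⊤ := hK.measure_lt_top.ne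
  have hKm : MeasurableSet K := hK.measurableSet
  haveI : Fact (volume K < ⊤) := ⟨hfin.lt_top⟩
  have hfK : IntegrableOn f K volume := hf.integrable one_le_two
  set T : ℕ → ℝ := fun j =>
    ∑ B ∈ P.part j, ∑ ℓ₂ ∈ Finset.range (P.numChild j B), ∑ ℓ₁ ∈ Finset.range ℓ₂,
      (∫ x, f x * psiFn B (P.child j B ℓ₁) (P.child j B ℓ₂) x ∂(volume.restrict K)) ^ 2
    with hTdef
  have hT : ∀ j, T j = P.enSum f (j + 1) - P.enSum f j := by
    intro j
    rw [hTdef]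
    simp only
    rw [Finset.sum_congr rfl fun B hB => P.block_sum hfin hfK hB]
    rw [Finset.sum_sub_distrib]
    rw [P.sum_children_eq (fun C => (∫ x in C, f x) ^ 2 / (volume C).toReal) j]
    rfl
  have hT0 : ∀ j, 0 ≤ T j := fun j =>
    Finset.sum_nonneg fun B _ => Finset.sum_nonneg fun ℓ₂ _ =>
      Finset.sum_nonneg fun ℓ₁ _ => sq_nonneg _
  have hpartial : ∀ N, ∑ j ∈ Finset.range N, T j = P.enSum f N - P.enSum f 0 := by
    intro N
    calc ∑ j ∈ Finset.range N, T j
        = ∑ j ∈ Finset.range N, (P.enSum f (j + 1) - P.enSum f j) :=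
          Finset.sum_congr rfl fun j _ => hT j
      _ = P.enSum f N - P.enSum f 0 := Finset.sum_range_sub (fun j => P.enSum f j) N
  have htend : Filter.Tendsto (fun N => ∑ j ∈ Finset.range N, T j) Filter.atTop
      (nhds ((∫ x, f x ^ 2 ∂(volume.restrict K)) - P.enSum f 0)) := by
    have := (P.tendsto_enSum hK hf).sub_const (P.enSum f 0)
    refine this.congr fun N => (hpartial N).symm
  have hHasSum : HasSum T ((∫ x, f x ^ 2 ∂(volume.restrict K)) - P.enSum f 0) :=
    (hasSum_iff_tendsto_nat_of_nonneg hT0 _).2 htend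
  have hE0 : P.enSum f 0 = (∫ x, f x * gammaFn K x ∂(volume.restrict K)) ^ 2 := by
    have hsum0 : P.enSum f 0 = (∫ x in K, f x) ^ 2 / (volume K).toReal := by
      rw [HierarchicalPartition.enSum, P.root, Finset.sum_singleton]
    have hgam : ∫ x, f x * gammaFn K x ∂(volume.restrict K) =
        (Real.sqrt (volume K).toReal)⁻¹ * ∫ x in K, f x := by
      have hpt : (fun x => f x * gammaFn K x) =
          fun x => f x * K.indicator (fun _ => (Real.sqrt (volume K).toReal)⁻¹) x := rfl
      rw [hpt, integral_mul_indicator_const hfK hKm subset_rfl]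
    rw [hsum0, hgam, mul_pow, inv_pow, Real.sq_sqrt ENNReal.toReal_nonneg]
    rw [div_eq_mul_inv, mul_comm]
  rw [hHasSum.tsum_eq, ← hE0]
  ring
end

section
/- Let K ⊆ ℝ^d be a compact set with |K| > 0 and let {B_j}_{j≥0} be a hierarchical partition of K, with associated framelets ψ_{j,B}^{(ℓ_1,ℓ_2)}. For j ≥ 0 let V_j = span{χ_B : B ∈ B_j} and W_j = span{ψ_{j,B}^{(ℓ_1,ℓ_2)} : B ∈ B_j, 1 ≤ ℓ_1 < ℓ_2 ≤ c_B} in L²(K). Then V_j ⊥ W_j and V_{j+1} = V_j ⊕ W_j (orthogonal direct sum) for every j ≥ 0. -/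
open MeasureTheory Filter

/-- `V_j = span{χ_B : B ∈ B_j}`, viewed inside `L²(K)`. -/
noncomputable def Vspace {X : Type*} [MeasureSpace X] [PseudoEMetricSpace X] {K : Set X}
    (P : HierarchicalPartition X K) (j : ℕ) :
    Submodule ℝ (Lp ℝ 2 (volume.restrict K)) :=
  Submodule.span ℝ
    {g : Lp ℝ 2 (volume.restrict K) |
      ∃ B ∈ P.part j, (g : X → ℝ) =ᵐ[volume.restrict K] B.indicator fun _ => (1 : ℝ)}

/-- `W_j = span{ψ_{j,B}^{(ℓ₁,ℓ₂)} : B ∈ B_j, 1 ≤ ℓ₁ < ℓ₂ ≤ c_B}`, viewed inside `L²(K)`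
(children indexed from `0`, so the pairs are `ℓ₁ < ℓ₂ < c_B`). -/
noncomputable def Wspace {X : Type*} [MeasureSpace X] [PseudoEMetricSpace X] {K : Set X}
    (P : HierarchicalPartition X K) (j : ℕ) :
    Submodule ℝ (Lp ℝ 2 (volume.restrict K)) :=
  Submodule.span ℝ
    {g : Lp ℝ 2 (volume.restrict K) |
      ∃ B ∈ P.part j, ∃ ℓ₁ ℓ₂ : ℕ, ℓ₁ < ℓ₂ ∧ ℓ₂ < P.numChild j B ∧
        (g : X → ℝ) =ᵐ[volume.restrict K] psiFn B (P.child j B ℓ₁) (P.child j B ℓ₂)}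

section Aux

variable {X : Type*} [MeasureSpace X] [PseudoEMetricSpace X] {K : Set X}

lemma HP_part_subset (P : HierarchicalPartition X K) {j : ℕ} {B : Set X}
    (hB : B ∈ P.part j) : B ⊆ K := by
  conv_rhs => rw [← P.cover j]
  intro x hx
  exact Set.mem_biUnion hB hx

lemma HP_restrict_ne_top (hKfin : volume K ≠ ⊤) (B : Set X) :
    volume.restrict K B ≠ ⊤ :=
  (((measure_mono (Set.subset_univ B)).trans_eq
    (Measure.restrict_apply_univ K)).trans_lt hKfin.lt_top).ne

lemma HP_restrict_eq {B : Set X} (hB : MeasurableSet B) (hBK : B ⊆ K) :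
    volume.restrict K B = volume B := by
  rw [Measure.restrict_apply hB, Set.inter_eq_self_of_subset_left hBK]

noncomputable def blockLp (K : Set X) (hKfin : volume K ≠ ⊤) {B : Set X}
    (hB : MeasurableSet B) : Lp ℝ 2 (volume.restrict K) :=
  indicatorConstLp 2 hB (HP_restrict_ne_top hKfin B) (1 : ℝ)

lemma blockLp_coeFn (hKfin : volume K ≠ ⊤) {B : Set X} (hB : MeasurableSet B) :
    ⇑(blockLp K hKfin hB) =ᵐ[volume.restrict K] B.indicator (fun _ => (1 : ℝ)) :=
  indicatorConstLp_coeFn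

noncomputable def psiLp (K : Set X) (hKfin : volume K ≠ ⊤) (B : Set X) {C C' : Set X}
    (hC : MeasurableSet C) (hC' : MeasurableSet C') : Lp ℝ 2 (volume.restrict K) :=
  (Real.sqrt ((volume C').toReal / (volume B).toReal)
      * (Real.sqrt (volume C).toReal)⁻¹) • blockLp K hKfin hC
    - (Real.sqrt ((volume C).toReal / (volume B).toReal)
      * (Real.sqrt (volume C').toReal)⁻¹) • blockLp K hKfin hC'

lemma indicator_const_eq_mul (C : Set X) (a : ℝ) (x : X) :
    C.indicator (fun _ => a) x = a * C.indicator (fun _ => (1 : ℝ)) x := by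
  by_cases hx : x ∈ C <;> simp [hx]

lemma psiLp_coeFn (hKfin : volume K ≠ ⊤) (B : Set X) {C C' : Set X}
    (hC : MeasurableSet C) (hC' : MeasurableSet C') :
    ⇑(psiLp K hKfin B hC hC') =ᵐ[volume.restrict K] psiFn B C C' := by
  set a := Real.sqrt ((volume C').toReal / (volume B).toReal)
      * (Real.sqrt (volume C).toReal)⁻¹ with ha
  set b := Real.sqrt ((volume C).toReal / (volume B).toReal)
      * (Real.sqrt (volume C').toReal)⁻¹ with hb
  filter_upwards [Lp.coeFn_sub (a • blockLp K hKfin hC) (b • blockLp K hKfin hC'),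
    Lp.coeFn_smul a (blockLp K hKfin hC), Lp.coeFn_smul b (blockLp K hKfin hC'),
    blockLp_coeFn hKfin hC, blockLp_coeFn hKfin hC'] with x h0 h1 h2 h3 h4
  have : ⇑(psiLp K hKfin B hC hC') x = a * C.indicator (fun _ => (1:ℝ)) x
      - b * C'.indicator (fun _ => (1:ℝ)) x := by
    rw [psiLp, ← ha, ← hb, h0, Pi.sub_apply, h1, h2, Pi.smul_apply, Pi.smul_apply,
      smul_eq_mul, smul_eq_mul, h3, h4]
  have g1 : gammaFn C x
      = (Real.sqrt (volume C).toReal)⁻¹ * C.indicator (fun _ => (1:ℝ)) x :=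
    indicator_const_eq_mul C _ x
  have g2 : gammaFn C' x
      = (Real.sqrt (volume C').toReal)⁻¹ * C'.indicator (fun _ => (1:ℝ)) x :=
    indicator_const_eq_mul C' _ x
  rw [this]
  simp only [psiFn]
  rw [g1, g2]
  ring

lemma inner_blockLp_blockLp (hKfin : volume K ≠ ⊤) {B C : Set X}
    (hB : MeasurableSet B) (hC : MeasurableSet C) :
    (inner ℝ (blockLp K hKfin hB) (blockLp K hKfin hC) : ℝ)
      = (volume.restrict K (B ∩ C)).toReal := by
  rw [blockLp, blockLp, L2.inner_indicatorConstLp_one hB (HP_restrict_ne_top hKfin B)]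
  have h1 : ∫ x in B, ⇑(indicatorConstLp 2 hC (HP_restrict_ne_top hKfin C) (1:ℝ)) x
        ∂(volume.restrict K)
      = ∫ x in B, C.indicator (fun _ => (1:ℝ)) x ∂(volume.restrict K) :=
    integral_congr_ae indicatorConstLp_coeFn.restrict
  rw [h1, setIntegral_indicator hC, setIntegral_const, smul_eq_mul, mul_one]
  rfl

lemma coeFn_sum_ae {ι : Type*} {ν : Measure X} (s : Finset ι) (f : ι → Lp ℝ 2 ν)
    (g : ι → X → ℝ) (h : ∀ i ∈ s, ⇑(f i) =ᵐ[ν] g i) :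
    ⇑(∑ i ∈ s, f i) =ᵐ[ν] fun x => ∑ i ∈ s, g i x := by
  classical
  induction s using Finset.induction_on with
  | empty => simp only [Finset.sum_empty]; exact Lp.coeFn_zero ℝ 2 ν
  | @insert a s ha ih =>
    rw [Finset.sum_insert ha]
    filter_upwards [Lp.coeFn_add (f a) (∑ i ∈ s, f i),
      ih (fun i hi => h i (Finset.mem_insert_of_mem hi)),
      h a (Finset.mem_insert_self a s)] with x h1 h2 h3
    simp only [h1, Pi.add_apply, h2, h3, Finset.sum_insert ha]

end Aux
section Aux2

set_option linter.unusedSectionVars false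

variable {X : Type*} [MeasureSpace X] [PseudoEMetricSpace X] {K : Set X}

lemma HP_child_subset (P : HierarchicalPartition X K) {j : ℕ} {B : Set X}
    (hB : B ∈ P.part j) {ℓ : ℕ} (hℓ : ℓ < P.numChild j B) : P.child j B ℓ ⊆ B := by
  intro x hx
  rw [P.child_union j B hB]
  exact Set.mem_biUnion (Finset.mem_range.mpr hℓ) hx

lemma HP_vol_fin (hKfin : volume K ≠ ⊤) (P : HierarchicalPartition X K) {j : ℕ} {B : Set X}
    (hB : B ∈ P.part j) : volume B ≠ ⊤ :=
  ((measure_mono (HP_part_subset P hB)).trans_lt hKfin.lt_top).ne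

lemma HP_toReal_pos (hKfin : volume K ≠ ⊤) (P : HierarchicalPartition X K) {j : ℕ} {B : Set X}
    (hB : B ∈ P.part j) : 0 < (volume B).toReal :=
  ENNReal.toReal_pos (P.pos j B hB).ne' (HP_vol_fin hKfin P hB)

lemma HP_sum_child_volume (P : HierarchicalPartition X K) {j : ℕ} {B : Set X}
    (hB : B ∈ P.part j) :
    ∑ ℓ ∈ Finset.range (P.numChild j B), volume (P.child j B ℓ) = volume B := by
  conv_rhs => rw [P.child_union j B hB]
  rw [measure_biUnion_finset₀]
  · intro ℓ₁ h1 ℓ₂ h2 hne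
    exact P.null_inter (j+1) _ (P.child_mem j B hB ℓ₁ (Finset.mem_range.mp (by exact h1)))
      _ (P.child_mem j B hB ℓ₂ (Finset.mem_range.mp (by exact h2)))
      (P.child_ne j B hB ℓ₁ (Finset.mem_range.mp (by exact h1))
        ℓ₂ (Finset.mem_range.mp (by exact h2)) hne)
  · intro ℓ hℓ
    exact (P.measurableSet (j+1) _ (P.child_mem j B hB ℓ (Finset.mem_range.mp hℓ))).nullMeasurableSet

lemma HP_sum_child_indicator (P : HierarchicalPartition X K) {j : ℕ} {B : Set X}
    (hB : B ∈ P.part j) :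
    (B.indicator (fun _ => (1:ℝ)))
      =ᵐ[volume.restrict K]
        fun x => ∑ ℓ ∈ Finset.range (P.numChild j B),
          (P.child j B ℓ).indicator (fun _ => (1:ℝ)) x := by
  set c := P.numChild j B with hc
  have key : ∀ᵐ x ∂(volume : Measure X), ∀ k, ∀ ℓ, k < c → ℓ < c → k ≠ ℓ →
      x ∉ P.child j B k ∩ P.child j B ℓ := by
    rw [ae_all_iff]
    intro k
    rw [ae_all_iff]
    intro ℓ
    by_cases h : k < c ∧ ℓ < c ∧ k ≠ ℓ
    · obtain ⟨h1, h2, h3⟩ := h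
      have h0 : volume (P.child j B k ∩ P.child j B ℓ) = 0 :=
        P.null_inter (j+1) _ (P.child_mem j B hB k h1) _ (P.child_mem j B hB ℓ h2)
          (P.child_ne j B hB k h1 ℓ h2 h3)
      filter_upwards [measure_eq_zero_iff_ae_notMem.mp h0] with x hx _ _ _ using hx
    · filter_upwards with x hk hl hne
      exact absurd ⟨hk, hl, hne⟩ h
  refine ((key.filter_mono (ae_mono Measure.restrict_le_self)).mono ?_)
  intro x hx
  show B.indicator (fun _ => (1:ℝ)) x
    = ∑ ℓ ∈ Finset.range c, (P.child j B ℓ).indicator (fun _ => (1:ℝ)) x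
  by_cases hxB : x ∈ B
  · obtain ⟨k, hk, hxk⟩ : ∃ k, k < c ∧ x ∈ P.child j B k := by
      have h := hxB
      rw [P.child_union j B hB] at h
      simp only [Set.mem_iUnion, Finset.mem_range, exists_prop] at h
      exact ⟨h.choose, h.choose_spec⟩
    rw [Set.indicator_of_mem hxB,
      Finset.sum_eq_single_of_mem k (Finset.mem_range.mpr hk)]
    · rw [Set.indicator_of_mem hxk]
    · intro ℓ hℓ hne
      exact Set.indicator_of_notMem
        (fun hxl => hx ℓ k (Finset.mem_range.mp hℓ) hk hne ⟨hxl, hxk⟩) _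
  · rw [Set.indicator_of_notMem hxB]
    symm
    refine Finset.sum_eq_zero fun ℓ hℓ => Set.indicator_of_notMem
      (fun hxl => hxB (HP_child_subset P hB (Finset.mem_range.mp hℓ) hxl)) _

lemma HP_exists_parent (P : HierarchicalPartition X K) {j : ℕ} {C : Set X}
    (hC : C ∈ P.part (j+1)) :
    ∃ B ∈ P.part j, ∃ k, k < P.numChild j B ∧ P.child j B k = C := by
  have h1 : ∃ B ∈ P.part j, 0 < volume (C ∩ B) := by
    by_contra h
    push_neg at h
    have hCK : C ⊆ ⋃ B ∈ P.part j, B := by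
      rw [P.cover j]; exact HP_part_subset P hC
    have hCeq : C = ⋃ B ∈ P.part j, C ∩ B := by
      rw [← Set.inter_iUnion₂]
      exact (Set.inter_eq_self_of_subset_left hCK).symm
    have : volume C = 0 := by
      rw [hCeq]
      refine le_antisymm ((measure_biUnion_finset_le _ _).trans ?_) zero_le
      have : ∀ B ∈ P.part j, volume (C ∩ B) = 0 := fun B hB =>
        le_antisymm (h B hB) zero_le
      simp [Finset.sum_congr rfl this]
    exact absurd this (P.pos _ C hC).ne'
  obtain ⟨B, hB, hpos⟩ := h1
  have h2 : ∃ k, k < P.numChild j B ∧ 0 < volume (C ∩ P.child j B k) := by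
    by_contra h
    push_neg at h
    have hCB : C ∩ B = ⋃ ℓ ∈ Finset.range (P.numChild j B), C ∩ P.child j B ℓ := by
      rw [← Set.inter_iUnion₂, ← P.child_union j B hB]
    have : volume (C ∩ B) = 0 := by
      rw [hCB]
      refine le_antisymm ((measure_biUnion_finset_le _ _).trans ?_) zero_le
      have : ∀ ℓ ∈ Finset.range (P.numChild j B), volume (C ∩ P.child j B ℓ) = 0 :=
        fun ℓ hℓ => le_antisymm (h ℓ (Finset.mem_range.mp hℓ)) zero_le
      simp [Finset.sum_congr rfl this]
    exact absurd this hpos.ne'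
  obtain ⟨k, hk, hkpos⟩ := h2
  refine ⟨B, hB, k, hk, ?_⟩
  by_contra hne
  have := P.null_inter (j+1) _ (P.child_mem j B hB k hk) C hC hne
  rw [Set.inter_comm] at this
  exact absurd this hkpos.ne'

end Aux2
section Aux3

set_option linter.unusedSectionVars false
set_option maxHeartbeats 1000000

variable {X : Type*} [MeasureSpace X] [PseudoEMetricSpace X] {K : Set X}

lemma blockLp_mem_V (hKfin : volume K ≠ ⊤) (P : HierarchicalPartition X K) {j : ℕ}
    {B : Set X} (hB : B ∈ P.part j) (hm : MeasurableSet B) :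
    blockLp K hKfin hm ∈ Vspace P j :=
  Submodule.subset_span ⟨B, hB, blockLp_coeFn hKfin hm⟩

lemma psiLp_mem_W (hKfin : volume K ≠ ⊤) (P : HierarchicalPartition X K) {j : ℕ}
    {B : Set X} (hB : B ∈ P.part j) {ℓ₁ ℓ₂ : ℕ} (h12 : ℓ₁ < ℓ₂) (h2c : ℓ₂ < P.numChild j B)
    (hm1 : MeasurableSet (P.child j B ℓ₁)) (hm2 : MeasurableSet (P.child j B ℓ₂)) :
    psiLp K hKfin B hm1 hm2 ∈ Wspace P j :=
  Submodule.subset_span ⟨B, hB, ℓ₁, ℓ₂, h12, h2c, psiLp_coeFn hKfin B hm1 hm2⟩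

lemma Vspace_le (P : HierarchicalPartition X K) (j : ℕ)
    {Q : Submodule ℝ (Lp ℝ 2 (volume.restrict K))}
    (h : ∀ (g : Lp ℝ 2 (volume.restrict K)) (B : Set X), B ∈ P.part j →
      ((g : X → ℝ) =ᵐ[volume.restrict K] B.indicator fun _ => (1 : ℝ)) → g ∈ Q) :
    Vspace P j ≤ Q := by
  rw [Vspace, Submodule.span_le]
  rintro g ⟨B, hB, hg⟩
  exact h g B hB hg

lemma Wspace_le (P : HierarchicalPartition X K) (j : ℕ)
    {Q : Submodule ℝ (Lp ℝ 2 (volume.restrict K))}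
    (h : ∀ (g : Lp ℝ 2 (volume.restrict K)) (B : Set X), B ∈ P.part j →
      ∀ ℓ₁ ℓ₂ : ℕ, ℓ₁ < ℓ₂ → ℓ₂ < P.numChild j B →
      ((g : X → ℝ) =ᵐ[volume.restrict K]
        psiFn B (P.child j B ℓ₁) (P.child j B ℓ₂)) → g ∈ Q) :
    Wspace P j ≤ Q := by
  rw [Wspace, Submodule.span_le]
  rintro g ⟨B, hB, ℓ₁, ℓ₂, h12, h2c, hg⟩
  exact h g B hB ℓ₁ ℓ₂ h12 h2c hg

lemma psiLp_swap (hKfin : volume K ≠ ⊤) (B : Set X) {C C' : Set X}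
    (hC : MeasurableSet C) (hC' : MeasurableSet C') :
    psiLp K hKfin B hC hC' = - psiLp K hKfin B hC' hC := by
  rw [psiLp, psiLp, neg_sub]

end Aux3
section Aux4

set_option linter.unusedSectionVars false
set_option maxHeartbeats 1000000

variable {X : Type*} [MeasureSpace X] [PseudoEMetricSpace X] {K : Set X}

lemma HP_isOrtho (hKfin : volume K ≠ ⊤) (P : HierarchicalPartition X K) (j : ℕ) :
    Vspace P j ⟂ Wspace P j := by
  rw [Vspace, Wspace, Submodule.isOrtho_span]
  rintro u ⟨B, hB, hu⟩ v ⟨B', hB', ℓ₁, ℓ₂, h12, h2c, hv⟩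
  have h1c : ℓ₁ < P.numChild j B' := h12.trans h2c
  have hBm : MeasurableSet B := P.measurableSet j B hB
  have hC1 : P.child j B' ℓ₁ ∈ P.part (j+1) := P.child_mem j B' hB' ℓ₁ h1c
  have hC2 : P.child j B' ℓ₂ ∈ P.part (j+1) := P.child_mem j B' hB' ℓ₂ h2c
  have hC1m : MeasurableSet (P.child j B' ℓ₁) := P.measurableSet (j+1) _ hC1
  have hC2m : MeasurableSet (P.child j B' ℓ₂) := P.measurableSet (j+1) _ hC2
  have hu' : u = blockLp K hKfin hBm := Lp.ext (hu.trans (blockLp_coeFn hKfin hBm).symm)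
  have hv' : v = psiLp K hKfin B' hC1m hC2m :=
    Lp.ext (hv.trans (psiLp_coeFn hKfin B' hC1m hC2m).symm)
  rw [hu', hv', psiLp, inner_sub_right, real_inner_smul_right, real_inner_smul_right,
    inner_blockLp_blockLp hKfin hBm hC1m, inner_blockLp_blockLp hKfin hBm hC2m]
  by_cases hBB : B = B'
  · subst hBB
    have hsub1 : P.child j B ℓ₁ ⊆ B := HP_child_subset P hB h1c
    have hsub2 : P.child j B ℓ₂ ⊆ B := HP_child_subset P hB h2c
    rw [Set.inter_eq_self_of_subset_right hsub1, Set.inter_eq_self_of_subset_right hsub2,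
      HP_restrict_eq hC1m (hsub1.trans (HP_part_subset P hB)),
      HP_restrict_eq hC2m (hsub2.trans (HP_part_subset P hB))]
    have hv1 : 0 < (volume (P.child j B ℓ₁)).toReal := HP_toReal_pos hKfin P hC1
    have hv2 : 0 < (volume (P.child j B ℓ₂)).toReal := HP_toReal_pos hKfin P hC2
    have hvB : 0 < (volume B).toReal := HP_toReal_pos hKfin P hB
    rw [Real.sqrt_div hv1.le, Real.sqrt_div hv2.le]
    have m1 : Real.sqrt (volume (P.child j B ℓ₁)).toReal
        * Real.sqrt (volume (P.child j B ℓ₁)).toReal = (volume (P.child j B ℓ₁)).toReal :=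
      Real.mul_self_sqrt hv1.le
    have m2 : Real.sqrt (volume (P.child j B ℓ₂)).toReal
        * Real.sqrt (volume (P.child j B ℓ₂)).toReal = (volume (P.child j B ℓ₂)).toReal :=
      Real.mul_self_sqrt hv2.le
    have n1 : Real.sqrt (volume (P.child j B ℓ₁)).toReal ≠ 0 :=
      (Real.sqrt_pos.mpr hv1).ne'
    have n2 : Real.sqrt (volume (P.child j B ℓ₂)).toReal ≠ 0 :=
      (Real.sqrt_pos.mpr hv2).ne'
    have nB : Real.sqrt (volume B).toReal ≠ 0 := (Real.sqrt_pos.mpr hvB).ne'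
    have e1 : (Real.sqrt (volume (P.child j B ℓ₁)).toReal)⁻¹
        * (volume (P.child j B ℓ₁)).toReal = Real.sqrt (volume (P.child j B ℓ₁)).toReal := by
      rw [inv_mul_eq_div, div_eq_iff n1]
      exact m1.symm
    have e2 : (Real.sqrt (volume (P.child j B ℓ₂)).toReal)⁻¹
        * (volume (P.child j B ℓ₂)).toReal = Real.sqrt (volume (P.child j B ℓ₂)).toReal := by
      rw [inv_mul_eq_div, div_eq_iff n2]
      exact m2.symm
    rw [mul_assoc, mul_assoc, e1, e2]
    ring
  · have z1 : volume.restrict K (B ∩ P.child j B' ℓ₁) = 0 := by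
      rw [HP_restrict_eq (hBm.inter hC1m)
        (Set.inter_subset_left.trans (HP_part_subset P hB))]
      exact measure_mono_null
        (Set.inter_subset_inter_right _ (HP_child_subset P hB' h1c))
        (P.null_inter j B hB B' hB' hBB)
    have z2 : volume.restrict K (B ∩ P.child j B' ℓ₂) = 0 := by
      rw [HP_restrict_eq (hBm.inter hC2m)
        (Set.inter_subset_left.trans (HP_part_subset P hB))]
      exact measure_mono_null
        (Set.inter_subset_inter_right _ (HP_child_subset P hB' h2c))
        (P.null_inter j B hB B' hB' hBB)
    rw [z1, z2]
    simp

end Aux4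
section Aux5

set_option linter.unusedSectionVars false
set_option maxHeartbeats 1000000

variable {X : Type*} [MeasureSpace X] [PseudoEMetricSpace X] {K : Set X}

lemma HP_V_le_Vsucc (hKfin : volume K ≠ ⊤) (P : HierarchicalPartition X K) (j : ℕ) :
    Vspace P j ≤ Vspace P (j + 1) := by
  refine Vspace_le P j ?_
  intro g B hB hg
  have hBm : MeasurableSet B := P.measurableSet j B hB
  have hg' : g = blockLp K hKfin hBm := Lp.ext (hg.trans (blockLp_coeFn hKfin hBm).symm)
  have key : blockLp K hKfin hBm
      = ∑ ℓ ∈ (Finset.range (P.numChild j B)).attach,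
          blockLp K hKfin (P.measurableSet (j+1) _
            (P.child_mem j B hB ℓ.1 (Finset.mem_range.mp ℓ.2))) := by
    apply Lp.ext
    have h1 := blockLp_coeFn hKfin hBm
    have h2 := HP_sum_child_indicator P hB
    have h3 := coeFn_sum_ae ((Finset.range (P.numChild j B)).attach)
      (fun ℓ => blockLp K hKfin (P.measurableSet (j+1) _
        (P.child_mem j B hB ℓ.1 (Finset.mem_range.mp ℓ.2))))
      (fun ℓ x => (P.child j B ℓ.1).indicator (fun _ => (1:ℝ)) x)
      (fun ℓ _ => blockLp_coeFn hKfin _)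
    refine h1.trans (h2.trans (EventuallyEq.trans ?_ h3.symm))
    filter_upwards with x
    exact (Finset.sum_attach _ _).symm
  rw [hg', key]
  exact Submodule.sum_mem _ fun ℓ _ =>
    blockLp_mem_V hKfin P (P.child_mem j B hB ℓ.1 (Finset.mem_range.mp ℓ.2)) _

lemma HP_W_le_Vsucc (hKfin : volume K ≠ ⊤) (P : HierarchicalPartition X K) (j : ℕ) :
    Wspace P j ≤ Vspace P (j + 1) := by
  refine Wspace_le P j ?_
  intro g B hB ℓ₁ ℓ₂ h12 h2c hg
  have h1c : ℓ₁ < P.numChild j B := h12.trans h2c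
  have hm1 : MeasurableSet (P.child j B ℓ₁) :=
    P.measurableSet (j+1) _ (P.child_mem j B hB ℓ₁ h1c)
  have hm2 : MeasurableSet (P.child j B ℓ₂) :=
    P.measurableSet (j+1) _ (P.child_mem j B hB ℓ₂ h2c)
  have hg' : g = psiLp K hKfin B hm1 hm2 :=
    Lp.ext (hg.trans (psiLp_coeFn hKfin B hm1 hm2).symm)
  rw [hg', psiLp]
  exact Submodule.sub_mem _
    (Submodule.smul_mem _ _ (blockLp_mem_V hKfin P (P.child_mem j B hB ℓ₁ h1c) hm1))
    (Submodule.smul_mem _ _ (blockLp_mem_V hKfin P (P.child_mem j B hB ℓ₂ h2c) hm2))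

lemma HP_Vsucc_le (hKfin : volume K ≠ ⊤) (P : HierarchicalPartition X K) (j : ℕ) :
    Vspace P (j + 1) ≤ Vspace P j ⊔ Wspace P j := by
  refine Vspace_le P (j+1) ?_
  intro g C hC hg
  obtain ⟨B, hB, k, hk, hCk⟩ := HP_exists_parent P hC
  subst hCk
  have hBm : MeasurableSet B := P.measurableSet j B hB
  have hkP : P.child j B k ∈ P.part (j+1) := P.child_mem j B hB k hk
  have hkm : MeasurableSet (P.child j B k) := P.measurableSet (j+1) _ hkP
  have hg' : g = blockLp K hKfin hkm := Lp.ext (hg.trans (blockLp_coeFn hKfin hkm).symm)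
  set c := P.numChild j B with hcdef
  have hmem : ∀ ℓ : {x // x ∈ (Finset.range c).erase k}, ℓ.1 < c :=
    fun ℓ => Finset.mem_range.mp (Finset.mem_erase.mp ℓ.2).2
  have hmemP : ∀ ℓ : {x // x ∈ (Finset.range c).erase k}, P.child j B ℓ.1 ∈ P.part (j+1) :=
    fun ℓ => P.child_mem j B hB ℓ.1 (hmem ℓ)
  have hmeas : ∀ ℓ : {x // x ∈ (Finset.range c).erase k}, MeasurableSet (P.child j B ℓ.1) :=
    fun ℓ => P.measurableSet (j+1) _ (hmemP ℓ)
  set σ : ℕ → ℝ := fun ℓ => Real.sqrt (volume (P.child j B ℓ)).toReal with hσdef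
  set m : ℝ := Real.sqrt (volume B).toReal with hmdef
  have hvB : 0 < (volume B).toReal := HP_toReal_pos hKfin P hB
  have hm0 : 0 < m := Real.sqrt_pos.mpr hvB
  have hσpos : ∀ ℓ, ℓ < c → 0 < σ ℓ :=
    fun ℓ hℓ => Real.sqrt_pos.mpr (HP_toReal_pos hKfin P (P.child_mem j B hB ℓ hℓ))
  have hσsq : ∀ ℓ, ℓ < c → σ ℓ ^ 2 = (volume (P.child j B ℓ)).toReal :=
    fun ℓ hℓ => Real.sq_sqrt (HP_toReal_pos hKfin P (P.child_mem j B hB ℓ hℓ)).le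
  have hmsq : m ^ 2 = (volume B).toReal := Real.sq_sqrt hvB.le
  have hsum_range : ∑ ℓ ∈ Finset.range c, σ ℓ ^ 2 = m ^ 2 := by
    rw [hmsq, ← HP_sum_child_volume P hB, ENNReal.toReal_sum
      (fun ℓ hℓ => HP_vol_fin hKfin P (P.child_mem j B hB ℓ (Finset.mem_range.mp hℓ)))]
    exact Finset.sum_congr rfl fun ℓ hℓ => hσsq ℓ (Finset.mem_range.mp hℓ)
  have key : blockLp K hKfin hkm
      = ((volume (P.child j B k)).toReal / (volume B).toReal) • blockLp K hKfin hBm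
        + ∑ ℓ ∈ ((Finset.range c).erase k).attach,
            ((σ k * σ ℓ.1) / m) • psiLp K hKfin B hkm (hmeas ℓ) := by
    apply Lp.ext
    have hsum_coe := coeFn_sum_ae (((Finset.range c).erase k).attach)
      (fun ℓ => ((σ k * σ ℓ.1) / m) • psiLp K hKfin B hkm (hmeas ℓ))
      (fun ℓ x => ((σ k * σ ℓ.1) / m) * psiFn B (P.child j B k) (P.child j B ℓ.1) x)
      (fun ℓ _ => by
        filter_upwards [Lp.coeFn_smul ((σ k * σ ℓ.1) / m) (psiLp K hKfin B hkm (hmeas ℓ)),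
          psiLp_coeFn hKfin B hkm (hmeas ℓ)] with x h1 h2
        rw [h1, Pi.smul_apply, smul_eq_mul, h2])
    filter_upwards [blockLp_coeFn hKfin hkm,
      Lp.coeFn_add (((volume (P.child j B k)).toReal / (volume B).toReal)
          • blockLp K hKfin hBm)
        (∑ ℓ ∈ ((Finset.range c).erase k).attach,
          ((σ k * σ ℓ.1) / m) • psiLp K hKfin B hkm (hmeas ℓ)),
      Lp.coeFn_smul ((volume (P.child j B k)).toReal / (volume B).toReal)
        (blockLp K hKfin hBm),
      blockLp_coeFn hKfin hBm, hsum_coe, HP_sum_child_indicator P hB]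
      with x e1 e2 e3 e4 e5 e6
    rw [e1, e2, Pi.add_apply, e3, Pi.smul_apply, smul_eq_mul, e4, e5]
    set t : ℕ → ℝ := fun ℓ => (P.child j B ℓ).indicator (fun _ => (1:ℝ)) x with htdef
    have hχB : B.indicator (fun _ => (1:ℝ)) x = ∑ ℓ ∈ Finset.range c, t ℓ := e6
    have hsummand : ∀ ℓ ∈ ((Finset.range c).erase k).attach,
        ((σ k * σ ℓ.1) / m) * psiFn B (P.child j B k) (P.child j B ℓ.1) x
        = (σ ℓ.1 ^ 2 * t k - σ k ^ 2 * t ℓ.1) / m ^ 2 := by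
      intro ℓ _
      have hℓc : ℓ.1 < c := hmem ℓ
      have h1 : Real.sqrt ((volume (P.child j B ℓ.1)).toReal / (volume B).toReal)
          = σ ℓ.1 / m := Real.sqrt_div (HP_toReal_pos hKfin P (hmemP ℓ)).le _
      have h2 : Real.sqrt ((volume (P.child j B k)).toReal / (volume B).toReal)
          = σ k / m := Real.sqrt_div (HP_toReal_pos hKfin P hkP).le _
      have g1 : gammaFn (P.child j B k) x = (σ k)⁻¹ * t k :=
        indicator_const_eq_mul _ _ x
      have g2 : gammaFn (P.child j B ℓ.1) x = (σ ℓ.1)⁻¹ * t ℓ.1 :=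
        indicator_const_eq_mul _ _ x
      simp only [psiFn]
      rw [h1, h2, g1, g2]
      have hσk : σ k ≠ 0 := (hσpos k hk).ne'
      have hσℓ : σ ℓ.1 ≠ 0 := (hσpos ℓ.1 hℓc).ne'
      field_simp
    rw [Finset.sum_congr rfl hsummand,
      Finset.sum_attach ((Finset.range c).erase k)
        (fun ℓ => (σ ℓ ^ 2 * t k - σ k ^ 2 * t ℓ) / m ^ 2)]
    have hA : ∑ ℓ ∈ (Finset.range c).erase k, σ ℓ ^ 2 = m ^ 2 - σ k ^ 2 := by
      have h2 : σ k ^ 2 + ∑ ℓ ∈ (Finset.range c).erase k, σ ℓ ^ 2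
          = ∑ ℓ ∈ Finset.range c, σ ℓ ^ 2 :=
        Finset.add_sum_erase _ (fun ℓ => σ ℓ ^ 2) (Finset.mem_range.mpr hk)
      linarith [hsum_range, h2]
    have hsplit : ∑ ℓ ∈ (Finset.range c).erase k, (σ ℓ ^ 2 * t k - σ k ^ 2 * t ℓ) / m ^ 2
        = ((m ^ 2 - σ k ^ 2) * t k - σ k ^ 2 * ∑ ℓ ∈ (Finset.range c).erase k, t ℓ) / m ^ 2 := by
      rw [← Finset.sum_div, Finset.sum_sub_distrib, ← Finset.sum_mul, hA, ← Finset.mul_sum]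
    rw [hsplit, hχB,
      ← Finset.add_sum_erase (Finset.range c) t (Finset.mem_range.mpr hk),
      ← hσsq k hk, ← hmsq]
    have hmne : m ≠ 0 := hm0.ne'
    field_simp
    ring
  rw [hg', key]
  refine Submodule.add_mem _
    (Submodule.mem_sup_left (Submodule.smul_mem _ _ (blockLp_mem_V hKfin P hB hBm)))
    (Submodule.sum_mem _ fun ℓ _ => Submodule.mem_sup_right (Submodule.smul_mem _ _ ?_))
  have hne : ℓ.1 ≠ k := (Finset.mem_erase.mp ℓ.2).1
  rcases lt_or_gt_of_ne hne with hlt | hgt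
  · rw [psiLp_swap]
    exact Submodule.neg_mem _ (psiLp_mem_W hKfin P hB hlt hk _ _)
  · exact psiLp_mem_W hKfin P hB hgt (hmem ℓ) _ _

end Aux5
/-- `V_j ⊥ W_j` and `V_{j+1} = V_j ⊕ W_j` (orthogonal direct sum, i.e.
`V_{j+1} = V_j ⊔ W_j` and `V_j ⊓ W_j = ⊥`) for every `j ≥ 0`. -/
theorem Vspace_succ_eq_orthogonal_direct_sum
    {d : ℕ} (K : Set (Fin d → ℝ)) (hK : IsCompact K) (hKpos : 0 < volume K)
    (P : HierarchicalPartition (Fin d → ℝ) K) (j : ℕ) :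
    (∀ u ∈ Vspace P j, ∀ w ∈ Wspace P j, (inner ℝ u w : ℝ) = 0) ∧
      Vspace P (j + 1) = Vspace P j ⊔ Wspace P j ∧ Vspace P j ⊓ Wspace P j = ⊥ := by
  have hKfin : volume K ≠ ⊤ := hK.measure_lt_top.ne
  have hortho := HP_isOrtho hKfin P j
  exact ⟨fun u hu w hw => hortho.inner_eq hu hw,
    le_antisymm (HP_Vsucc_le hKfin P j)
      (sup_le (HP_V_le_Vsucc hKfin P j) (HP_W_le_Vsucc hKfin P j)),
    disjoint_iff.mp hortho.disjoint⟩
end
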